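/- Let A, B ∈ ℝ and consider the recursion X_{n+1} = A X_n + B √h σ ξ_n with deterministic initial value X_0 = x. If A² < 1, then lim_{n→∞} E(X_n²) = h σ² B²/(1 − A²) = (σ²/(2γ)) · R(z), where R(z) := 2 z B²/(A² − 1) and z = −γh (note R(z) ≥ 0 in this case, so R(z) = |R(z)|). -/

import Mathlib

open MeasureTheory ProbabilityTheory Filter Topology

namespace LimitSecondMomentAux

open Real Set

lemma integral_sq_exp_half : ∫ x : ℝ, x ^ 2 * rexp (-(1/2) * x ^ 2) = Real.sqrt (2 * π) := by
  have hb : (0:ℝ) < 1/2 := by norm_num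
  have h2 : ∀ x : ℝ, x ^ (2:ℝ) = x ^ 2 := fun x => by
    rw [show (2:ℝ) = ((2:ℕ):ℝ) by norm_cast, Real.rpow_natCast]
  have hint2 : Integrable fun x : ℝ => x ^ 2 * rexp (-(1/2) * x ^ 2) := by
    have h := integrable_rpow_mul_exp_neg_mul_sq hb (s := 2) (by norm_num)
    have he : (fun x : ℝ => x ^ (2:ℝ) * rexp (-(1/2) * x ^ 2))
        = fun x : ℝ => x ^ 2 * rexp (-(1/2) * x ^ 2) := funext fun x => by rw [h2]
    rwa [he] at h
  have hinte : Integrable fun x : ℝ => rexp (-(1/2) * x ^ 2) := integrable_exp_neg_mul_sq hb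
  have hint : Integrable fun x : ℝ => (x ^ 2 - 1) * rexp (-(1/2) * x ^ 2) := by
    have := hint2.sub hinte
    exact this.congr (Eventually.of_forall fun x => by simp only [Pi.sub_apply]; ring)
  have htend : Tendsto (fun x : ℝ => x * rexp (-(1/2) * x ^ 2)) atTop (𝓝 0) := by
    have hlo := rpow_mul_exp_neg_mul_sq_isLittleO_exp_neg hb 1
    have hhalf : Tendsto (fun x : ℝ => (1/2) * x) atTop atTop := tendsto_id.const_mul_atTop hb
    have h0 : Tendsto (fun x : ℝ => rexp (-(1/2) * x)) atTop (𝓝 0) := by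
      have := Real.tendsto_exp_neg_atTop_nhds_zero.comp hhalf
      exact this.congr fun x => by simp [Function.comp, neg_mul]
    have := hlo.tendsto_zero_of_tendsto h0
    refine this.congr (fun x => by rw [Real.rpow_one])
  have hderiv : ∀ x : ℝ, HasDerivAt (fun y : ℝ => -y * rexp (-(1/2) * y ^ 2))
      ((x ^ 2 - 1) * rexp (-(1/2) * x ^ 2)) x := by
    intro x
    have h1 : HasDerivAt (fun y : ℝ => -(1/2) * y ^ 2) (-(1/2) * (2 * x ^ 1)) x :=
      (hasDerivAt_pow 2 x).const_mul _
    have h2' := h1.exp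
    have h3 := ((hasDerivAt_id x).neg).mul h2'
    simp only [Pi.mul_def, Pi.neg_apply, id_eq] at h3
    refine h3.congr_deriv ?_
    ring
  have hbot : Tendsto (fun y : ℝ => -y * rexp (-(1/2) * y ^ 2)) atBot (𝓝 0) := by
    have := htend.comp tendsto_neg_atBot_atTop
    refine this.congr (fun x => ?_)
    simp [Function.comp, neg_mul]
  have htop : Tendsto (fun y : ℝ => -y * rexp (-(1/2) * y ^ 2)) atTop (𝓝 0) := by
    have := htend.neg
    simpa [neg_mul] using this
  have h0 := integral_of_hasDerivAt_of_tendsto hderiv hint hbot htop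
  rw [sub_zero] at h0
  have hsplit : ∫ x : ℝ, (x ^ 2 - 1) * rexp (-(1/2) * x ^ 2)
      = (∫ x : ℝ, x ^ 2 * rexp (-(1/2) * x ^ 2)) - ∫ x : ℝ, rexp (-(1/2) * x ^ 2) := by
    rw [← integral_sub hint2 hinte]
    congr 1; funext x; ring
  have hg : ∫ x : ℝ, rexp (-(1/2) * x ^ 2) = Real.sqrt (2 * π) := by
    rw [integral_gaussian]
    congr 1
    rw [div_div_eq_mul_div, div_one]
    ring
  rw [hsplit, hg] at h0
  linarith

lemma pdf_eq (x : ℝ) :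
    gaussianPDFReal 0 1 x = (Real.sqrt (2 * π))⁻¹ * rexp (-(1/2) * x ^ 2) := by
  simp only [gaussianPDFReal, NNReal.coe_one, mul_one, sub_zero]
  congr 1
  ring

lemma integral_N (g : ℝ → ℝ) :
    ∫ x, g x ∂(gaussianReal 0 1) = ∫ x, gaussianPDFReal 0 1 x * g x := by
  rw [gaussianReal_of_var_ne_zero 0 one_ne_zero]
  have hpdf : gaussianPDF 0 1
      = fun x => ((Real.toNNReal (gaussianPDFReal 0 1 x) : NNReal) : ENNReal) := rfl
  rw [hpdf, integral_withDensity_eq_integral_smul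
    ((measurable_gaussianPDFReal 0 1).real_toNNReal) g]
  congr 1; funext x
  rw [NNReal.smul_def, Real.coe_toNNReal _ (gaussianPDFReal_nonneg 0 1 x), smul_eq_mul]

lemma integrable_N_iff (g : ℝ → ℝ) :
    Integrable g (gaussianReal 0 1) ↔ Integrable (fun x => gaussianPDFReal 0 1 x * g x) := by
  rw [gaussianReal_of_var_ne_zero 0 one_ne_zero]
  have hpdf : gaussianPDF 0 1
      = fun x => ((Real.toNNReal (gaussianPDFReal 0 1 x) : NNReal) : ENNReal) := rfl
  rw [hpdf, integrable_withDensity_iff_integrable_coe_smul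
    ((measurable_gaussianPDFReal 0 1).real_toNNReal)]
  refine integrable_congr (Filter.Eventually.of_forall fun x => ?_)
  show (gaussianPDFReal 0 1 x).toNNReal • g x = gaussianPDFReal 0 1 x * g x
  rw [NNReal.smul_def, Real.coe_toNNReal _ (gaussianPDFReal_nonneg 0 1 x), smul_eq_mul]

lemma integrable_sq_N : Integrable (fun x : ℝ => x ^ 2) (gaussianReal 0 1) := by
  rw [integrable_N_iff]
  have hb : (0:ℝ) < 1/2 := by norm_num
  have h2 : ∀ x : ℝ, x ^ (2:ℝ) = x ^ 2 := fun x => by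
    rw [show (2:ℝ) = ((2:ℕ):ℝ) by norm_cast, Real.rpow_natCast]
  have hint2 : Integrable fun x : ℝ => x ^ 2 * rexp (-(1/2) * x ^ 2) := by
    have h := integrable_rpow_mul_exp_neg_mul_sq hb (s := 2) (by norm_num)
    have he : (fun x : ℝ => x ^ (2:ℝ) * rexp (-(1/2) * x ^ 2))
        = fun x : ℝ => x ^ 2 * rexp (-(1/2) * x ^ 2) := funext fun x => by rw [h2]
    rwa [he] at h
  refine (hint2.const_mul ((Real.sqrt (2 * π))⁻¹)).congr
    (Filter.Eventually.of_forall fun x => ?_)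
  show (Real.sqrt (2 * π))⁻¹ * (x ^ 2 * rexp (-(1/2) * x ^ 2)) = gaussianPDFReal 0 1 x * x ^ 2
  rw [pdf_eq]; ring

lemma sq_N : ∫ x, x ^ 2 ∂(gaussianReal 0 1) = 1 := by
  rw [integral_N]
  have he : (fun x : ℝ => gaussianPDFReal 0 1 x * x ^ 2)
      = fun x : ℝ => (Real.sqrt (2 * π))⁻¹ * (x ^ 2 * rexp (-(1/2) * x ^ 2)) :=
    funext fun x => by rw [pdf_eq]; ring
  rw [he, integral_const_mul, integral_sq_exp_half,
    inv_mul_cancel₀ (Real.sqrt_ne_zero'.mpr (by positivity))]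

lemma mean_N : ∫ x, x ∂(gaussianReal 0 1) = 0 := by
  have hmap : (gaussianReal 0 1).map (fun y : ℝ => (-1 : ℝ) * y) = gaussianReal 0 1 := by
    have h := gaussianReal_map_const_mul (μ := 0) (v := 1) (-1)
    have h2 : ((-1 : ℝ) * ·) = (fun y : ℝ => (-1 : ℝ) * y) := rfl
    rw [h2] at h
    rw [h]
    congr 1
    · ring
    · ext
      norm_num
  have h1 : ∫ x, x ∂(gaussianReal 0 1) = ∫ x, (-1 : ℝ) * x ∂(gaussianReal 0 1) := by
    conv_lhs => rw [← hmap]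
    exact integral_map (by fun_prop) aestronglyMeasurable_id
  rw [integral_const_mul] at h1
  linarith

lemma memLp_sq_N : MemLp (fun x : ℝ => x) 2 (gaussianReal 0 1) := by
  refine (memLp_two_iff_integrable_sq ?_).mpr integrable_sq_N
  exact aestronglyMeasurable_id

end LimitSecondMomentAux

/-- For the recursion `X_{n+1} = A X_n + B √h σ ξ_n` with deterministic
initial value `X_0 = x` and i.i.d. standard Gaussian `ξ_n`, if `A² < 1` then
`lim_{n→∞} E(X_n²) = h σ² B² / (1 - A²) = (σ²/(2γ)) R(z)` where
`R(z) = 2 z B² / (A² - 1)`, `z = -γh`, and `R(z) ≥ 0`. -/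
theorem limit_second_moment_linear_recursion
    {Ω : Type*} [MeasurableSpace Ω] (μ : Measure Ω) [IsProbabilityMeasure μ]
    (γ σ h : ℝ) (hγ : 0 < γ) (hσ : 0 < σ) (hh : 0 < h)
    (ξ : ℕ → Ω → ℝ) (hmeas : ∀ n, Measurable (ξ n))
    (hindep : iIndepFun ξ μ)
    (hgauss : ∀ n, μ.map (ξ n) = gaussianReal 0 1)
    (A B x : ℝ) (X : ℕ → Ω → ℝ)
    (hX0 : X 0 = fun _ => x)
    (hrec : ∀ n ω, X (n + 1) ω = A * X n ω + B * Real.sqrt h * σ * ξ n ω)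
    (hA : A ^ 2 < 1) :
    Tendsto (fun n => ∫ ω, (X n ω) ^ 2 ∂μ) atTop (𝓝 (h * σ ^ 2 * B ^ 2 / (1 - A ^ 2)))
      ∧ h * σ ^ 2 * B ^ 2 / (1 - A ^ 2)
          = σ ^ 2 / (2 * γ) * (2 * (-γ * h) * B ^ 2 / (A ^ 2 - 1))
      ∧ 0 ≤ 2 * (-γ * h) * B ^ 2 / (A ^ 2 - 1) := by
  classical
  set d : ℝ := B * Real.sqrt h * σ with hd
  -- basic facts about the noise
  have hximem : ∀ n, MemLp (ξ n) 2 μ := by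
    intro n
    have h1 : MemLp (fun x : ℝ => x) 2 (μ.map (ξ n)) := by
      rw [hgauss n]; exact LimitSecondMomentAux.memLp_sq_N
    have := (memLp_map_measure_iff (f := ξ n) (g := fun x : ℝ => x)
      h1.aestronglyMeasurable (hmeas n).aemeasurable).mp h1
    exact this
  have hximean : ∀ n, ∫ ω, ξ n ω ∂μ = 0 := by
    intro n
    have : ∫ ω, ξ n ω ∂μ = ∫ y, y ∂(μ.map (ξ n)) :=
      (integral_map (hmeas n).aemeasurable aestronglyMeasurable_id).symm
    rw [this, hgauss n, LimitSecondMomentAux.mean_N]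
  have hxisq : ∀ n, ∫ ω, (ξ n ω) ^ 2 ∂μ = 1 := by
    intro n
    have : ∫ ω, (ξ n ω) ^ 2 ∂μ = ∫ y, y ^ 2 ∂(μ.map (ξ n)) :=
      (integral_map (hmeas n).aemeasurable
        (measurable_id.pow_const 2).aestronglyMeasurable).symm
    rw [this, hgauss n, LimitSecondMomentAux.sq_N]
  -- explicit formula for X n
  have hform : ∀ n ω, X n ω
      = A ^ n * x + d * ∑ k ∈ Finset.range n, A ^ (n - 1 - k) * ξ k ω := by
    intro n
    induction n with
    | zero => intro ω; simp [hX0]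
    | succ n ih =>
      intro ω
      rw [hrec n ω, ih ω, Finset.sum_range_succ,
        show n + 1 - 1 - n = 0 from by omega, pow_zero, one_mul]
      have hsum : ∑ k ∈ Finset.range n, A ^ (n + 1 - 1 - k) * ξ k ω
          = A * ∑ k ∈ Finset.range n, A ^ (n - 1 - k) * ξ k ω := by
        rw [Finset.mul_sum]
        refine Finset.sum_congr rfl fun k hk => ?_
        rw [Finset.mem_range] at hk
        rw [show n + 1 - 1 - k = (n - 1 - k) + 1 from by omega, pow_succ]
        ring
      rw [hsum]
      ring
  have hXmeas : ∀ n, Measurable (X n) := by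
    intro n
    have : X n = fun ω => A ^ n * x + d * ∑ k ∈ Finset.range n, A ^ (n - 1 - k) * ξ k ω :=
      funext (hform n)
    rw [this]
    exact measurable_const.add
      ((Finset.measurable_sum _ fun k _ => (hmeas k).const_mul _).const_mul _)
  have hXmem : ∀ n, MemLp (X n) 2 μ := by
    intro n
    have he : X n = fun ω => A ^ n * x + d * ∑ k ∈ Finset.range n, A ^ (n - 1 - k) * ξ k ω :=
      funext (hform n)
    rw [he]
    refine MemLp.add (memLp_const (A ^ n * x)) (MemLp.const_mul ?_ d)
    have he2 : (fun ω => ∑ k ∈ Finset.range n, A ^ (n - 1 - k) * ξ k ω)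
        = ∑ k ∈ Finset.range n, fun ω => A ^ (n - 1 - k) * ξ k ω := by
      funext ω; rw [Finset.sum_apply]
    rw [he2]
    exact memLp_finset_sum' _ fun k _ => (hximem k).const_mul _
  -- independence of X n and ξ n
  have hindepX : ∀ n, IndepFun (X n) (ξ n) μ := by
    intro n
    set g : ℕ → ℝ → ℝ := fun j y => if j = n then y else A ^ (n - 1 - j) * y with hgdef
    have hgm : ∀ j, Measurable (g j) := by
      intro j
      by_cases hj : j = n
      · simp only [g, if_pos hj]; exact measurable_id
      · simp only [g, if_neg hj]; fun_prop
    have hcomp := hindep.comp g hgm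
    have hsum := hcomp.indepFun_finset_sum_of_notMem
      (fun j => (hgm j).comp (hmeas j)) (Finset.notMem_range_self (n := n))
    have hgn : g n ∘ ξ n = ξ n := by funext ω; simp [g]
    rw [hgn] at hsum
    have hfin := hsum.comp (φ := fun y : ℝ => A ^ n * x + d * y) (ψ := id)
      (measurable_const.add (measurable_id.const_mul d)) measurable_id
    have hXeq : X n = (fun y : ℝ => A ^ n * x + d * y)
        ∘ (∑ j ∈ Finset.range n, (g j ∘ ξ j)) := by
      funext ω
      have : (∑ j ∈ Finset.range n, (g j ∘ ξ j)) ω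
          = ∑ k ∈ Finset.range n, A ^ (n - 1 - k) * ξ k ω := by
        rw [Finset.sum_apply]
        refine Finset.sum_congr rfl fun k hk => ?_
        rw [Finset.mem_range] at hk
        simp [g, Nat.ne_of_lt hk]
      simp only [Function.comp_apply, this]
      exact hform n ω
    rw [hXeq]
    exact hfin
  -- one-step recursion for the second moment
  have key : ∀ n, ∫ ω, (X (n + 1) ω) ^ 2 ∂μ = A ^ 2 * ∫ ω, (X n ω) ^ 2 ∂μ + d ^ 2 := by
    intro n
    have hXn2 : Integrable (fun ω => (X n ω) ^ 2) μ := (hXmem n).integrable_sq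
    have hxi2 : Integrable (fun ω => (ξ n ω) ^ 2) μ := (hximem n).integrable_sq
    have hXint : Integrable (X n) μ := (hXmem n).integrable one_le_two
    have hxint : Integrable (ξ n) μ := (hximem n).integrable one_le_two
    have hcross : Integrable (fun ω => X n ω * ξ n ω) μ :=
      (hindepX n).integrable_mul hXint hxint
    have hcrossval : ∫ ω, X n ω * ξ n ω ∂μ = 0 := by
      have hthis := (hindepX n).integral_mul_eq_mul_integral (hXmeas n).aestronglyMeasurable
        (hmeas n).aestronglyMeasurable
      rw [hximean n, mul_zero] at hthis
      exact hthis
    have hexp : (fun ω => (X (n + 1) ω) ^ 2)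
        = fun ω => A ^ 2 * (X n ω) ^ 2
            + ((2 * A * d) * (X n ω * ξ n ω) + d ^ 2 * (ξ n ω) ^ 2) := by
      funext ω
      rw [hrec n ω]
      ring
    have i1 : Integrable (fun ω => A ^ 2 * (X n ω) ^ 2) μ := hXn2.const_mul _
    have i2 : Integrable (fun ω => (2 * A * d) * (X n ω * ξ n ω)) μ := hcross.const_mul _
    have i3 : Integrable (fun ω => d ^ 2 * (ξ n ω) ^ 2) μ := hxi2.const_mul _
    have i23 : Integrable (fun ω => (2 * A * d) * (X n ω * ξ n ω) + d ^ 2 * (ξ n ω) ^ 2) μ :=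
      i2.add i3
    rw [hexp, integral_add i1 i23, integral_add i2 i3,
      integral_const_mul, integral_const_mul, integral_const_mul, hcrossval, hxisq n]
    ring
  -- closed form
  have hclosed : ∀ n, ∫ ω, (X n ω) ^ 2 ∂μ
      = (A ^ 2) ^ n * x ^ 2 + d ^ 2 * ∑ k ∈ Finset.range n, (A ^ 2) ^ k := by
    intro n
    induction n with
    | zero => simp [hX0]
    | succ n ih =>
      rw [key n, ih, geom_sum_succ]
      ring
  -- the limit
  have hA2 : (0:ℝ) ≤ A ^ 2 := sq_nonneg A
  have h1 : Tendsto (fun n => (A ^ 2) ^ n * x ^ 2) atTop (𝓝 0) := by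
    have := (tendsto_pow_atTop_nhds_zero_of_abs_lt_one
      (by rwa [abs_of_nonneg hA2])).mul_const (x ^ 2)
    simpa using this
  have h2 : Tendsto (fun n => d ^ 2 * ∑ k ∈ Finset.range n, (A ^ 2) ^ k) atTop
      (𝓝 (d ^ 2 * (1 - A ^ 2)⁻¹)) :=
    ((hasSum_geometric_of_lt_one hA2 hA).tendsto_sum_nat).const_mul _
  have hval : d ^ 2 * (1 - A ^ 2)⁻¹ = h * σ ^ 2 * B ^ 2 / (1 - A ^ 2) := by
    have hds : d ^ 2 = h * σ ^ 2 * B ^ 2 := by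
      rw [hd]
      have : Real.sqrt h ^ 2 = h := Real.sq_sqrt hh.le
      nlinarith [this]
    rw [hds, div_eq_mul_inv]
  have htend : Tendsto (fun n => ∫ ω, (X n ω) ^ 2 ∂μ) atTop
      (𝓝 (h * σ ^ 2 * B ^ 2 / (1 - A ^ 2))) := by
    have := h1.add h2
    rw [zero_add, hval] at this
    exact this.congr fun n => (hclosed n).symm
  have hne : A ^ 2 - 1 ≠ 0 := by intro hcon; nlinarith
  have hne' : (1:ℝ) - A ^ 2 ≠ 0 := by intro hcon; nlinarith
  refine ⟨htend, ?_, ?_⟩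
  · field_simp
    ring
  · rw [div_nonneg_iff]
    right
    constructor
    · nlinarith [sq_nonneg B, mul_pos hγ hh]
    · nlinarith
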